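/- Let n,d ≥ 2 be integers, f ∈ H, v ∈ ℂⁿ∖{0}, λ ∈ ℂ, and suppose the restriction of DF_f(v,λ) to v^⊥×ℂ is invertible. Then for every s ∈ ℂ^×, the restriction of DF_{s^{d−1}f}(v,sλ) to v^⊥×ℂ is invertible and μ̂(s^{d−1}f, v, sλ) = μ̂(f, v, λ). -/

import Mathlib

noncomputable section

open scoped BigOperators

/-- `ℂⁿ` with the hermitian (L2) norm. -/
abbrev Cn (n : ℕ) : Type := EuclideanSpace ℂ (Fin n)

/-- `ℂⁿ × ℂ` with the hermitian (L2) norm. -/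
abbrev CnC (n : ℕ) : Type := WithLp 2 (EuclideanSpace ℂ (Fin n) × ℂ)

/-- The pair `(v, η) ∈ ℂⁿ × ℂ`. -/
def mkPair {n : ℕ} (v : Cn n) (η : ℂ) : CnC n := (WithLp.equiv 2 (Cn n × ℂ)).symm (v, η)

/-- Squared Bombieri-Weyl norm of a polynomial of degree `d` in `n` variables:
for `p = ∑ a_α √(d choose α) X^α` it equals `∑ |a_α|²`, i.e.
`∑ |coeff α p|² * α! / d!`. -/
def bwNormSq (n d : ℕ) (p : MvPolynomial (Fin n) ℂ) : ℝ :=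
  ∑ α ∈ p.support,
    (‖p.coeff α‖) ^ 2 * (∏ j, Nat.factorial (α j) : ℝ) / (Nat.factorial d : ℝ)

/-- Bombieri-Weyl norm of a system of `n` polynomials. -/
def bwNorm (n d : ℕ) (f : Fin n → MvPolynomial (Fin n) ℂ) : ℝ :=
  Real.sqrt (∑ i, bwNormSq n d (f i))

/-- Real part of the Bombieri-Weyl inner product of two systems. -/
def bwInnerRe (n d : ℕ) (f g : Fin n → MvPolynomial (Fin n) ℂ) : ℝ :=
  ∑ i, ∑ α ∈ (f i).support ∪ (g i).support,
    ((f i).coeff α * (starRingEnd ℂ) ((g i).coeff α)).re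
      * (∏ j, Nat.factorial (α j) : ℝ) / (Nat.factorial d : ℝ)

/-- Spherical (angular) distance of two systems w.r.t. the Bombieri-Weyl inner product. -/
def dSH (n d : ℕ) (f g : Fin n → MvPolynomial (Fin n) ℂ) : ℝ :=
  Real.arccos (bwInnerRe n d f g / (bwNorm n d f * bwNorm n d g))

/-- The map `F_f : ℂⁿ × ℂ → ℂⁿ`, `(X, Λ) ↦ f(X) - Λ^{d-1} X`. -/
def FF (n d : ℕ) (f : Fin n → MvPolynomial (Fin n) ℂ) (w : CnC n) : Cn n :=
  (WithLp.equiv 2 (Fin n → ℂ)).symm fun i =>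
    MvPolynomial.eval (fun j => ((WithLp.equiv 2 (Cn n × ℂ)) w).1 j) (f i)
      - ((WithLp.equiv 2 (Cn n × ℂ)) w).2 ^ (d - 1) * ((WithLp.equiv 2 (Cn n × ℂ)) w).1 i

/-- The hermitian orthogonal complement of `ℂ·w` in `ℂⁿ × ℂ`. -/
def perp {n : ℕ} (w : CnC n) : Submodule ℂ (CnC n) := (ℂ ∙ w)ᗮ

/-- The derivative `DF_f(w)` restricted to the subspace `u^⊥`. -/
def DFr (n d : ℕ) (f : Fin n → MvPolynomial (Fin n) ℂ) (w u : CnC n) :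
    perp u →L[ℂ] Cn n :=
  (fderiv ℂ (FF n d f) w).comp (perp u).subtypeL

/-- `DF_f(w)|_{u^⊥}` is invertible (as a map onto `ℂⁿ`). -/
def RestrInvertible (n d : ℕ) (f : Fin n → MvPolynomial (Fin n) ℂ) (w u : CnC n) : Prop :=
  (DFr n d f w u).IsInvertible

/-- The condition number `μ(f, v, λ) = ‖v‖^{d-1} ‖(DF_f(v,λ)|_{(v,λ)^⊥})⁻¹‖`
(the value is meaningful whenever the restriction is invertible). -/
def mu (n d : ℕ) (f : Fin n → MvPolynomial (Fin n) ℂ) (w : CnC n) : ℝ :=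
  ‖((WithLp.equiv 2 (Cn n × ℂ)) w).1‖ ^ (d - 1) * ‖(DFr n d f w w).inverse‖

/-- The block-diagonal map `diag(c·I_n, c')` on `ℂⁿ × ℂ`. -/
def diagMap (n : ℕ) (c c' : ℂ) : CnC n →L[ℂ] CnC n :=
  (((WithLp.prodContinuousLinearEquiv 2 ℂ (Cn n) ℂ).symm :
      (Cn n × ℂ) →L[ℂ] CnC n).comp
    (((c • ContinuousLinearMap.id ℂ (Cn n)).prodMap
        (c' • ContinuousLinearMap.id ℂ ℂ)).comp
      ((WithLp.prodContinuousLinearEquiv 2 ℂ (Cn n) ℂ) : CnC n →L[ℂ] (Cn n × ℂ))))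

/-- The condition number
`μ̂(f,v,λ) = ‖diag(‖f‖ I_n, ‖f‖^{(d-2)/(d-1)}) ∘ (DF_f(v,λ)|_{v^⊥×ℂ})⁻¹‖`
(the value is meaningful whenever the restriction is invertible);
here `v^⊥ × ℂ = (v,0)^⊥`. -/
def muHat (n d : ℕ) (f : Fin n → MvPolynomial (Fin n) ℂ) (v : Cn n) (lam : ℂ) : ℝ :=
  ‖(diagMap n ((bwNorm n d f : ℝ) : ℂ)
      (((bwNorm n d f) ^ (((d : ℝ) - 2) / ((d : ℝ) - 1)) : ℝ) : ℂ)).comp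
    (((perp (mkPair v 0)).subtypeL).comp
      (DFr n d f (mkPair v lam) (mkPair v 0)).inverse)‖

/-- Smale's `γ(f, ζ, η)`:
`‖(ζ,η)‖ · sup_{k ≥ 2} ‖(DF_f(ζ,η)|_{(ζ,η)^⊥})⁻¹ ∘ (1/k!) D^k F_f(ζ,η)‖^{1/(k-1)}`. -/
def gammaF (n d : ℕ) (f : Fin n → MvPolynomial (Fin n) ℂ) (w : CnC n) : ℝ :=
  ‖w‖ * ⨆ k : ℕ, if 2 ≤ k then
      ‖((DFr n d f w w).inverse).compContinuousMultilinearMap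
          (((Nat.factorial k : ℂ))⁻¹ • iteratedFDeriv ℂ k (FF n d f) w)‖
        ^ ((1 : ℝ) / ((k : ℝ) - 1))
    else 0

/-- Projective distance `d_P(x,y) = arccos(|⟨x,y⟩| / (‖x‖ ‖y‖))`. -/
def dProj {E : Type} [NormedAddCommGroup E] [InnerProductSpace ℂ E] (x y : E) : ℝ :=
  Real.arccos (‖(inner ℂ x y : ℂ)‖ / (‖x‖ * ‖y‖))

/-- Spherical distance `d_S(x,y) = arccos(Re⟨x,y⟩ / (‖x‖ ‖y‖))` for complex vectors
viewed as real vectors. -/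
def dSph {E : Type} [NormedAddCommGroup E] [InnerProductSpace ℂ E] (x y : E) : ℝ :=
  Real.arccos ((inner ℂ x y : ℂ).re / (‖x‖ * ‖y‖))

/-- Spherical distance in a real inner product space. -/
def dSphR {E : Type} [NormedAddCommGroup E] [InnerProductSpace ℝ E] (x y : E) : ℝ :=
  Real.arccos ((inner ℝ x y : ℝ) / (‖x‖ * ‖y‖))

end
noncomputable section AuxAll
section Aux
open ContinuousLinearMap

variable {n d : ℕ}

lemma diagMap_apply (n : ℕ) (c c' : ℂ) (w : CnC n) :
    diagMap n c c' w = (WithLp.equiv 2 (Cn n × ℂ)).symm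
      (c • ((WithLp.equiv 2 (Cn n × ℂ)) w).1, c' • ((WithLp.equiv 2 (Cn n × ℂ)) w).2) := rfl

lemma diagMap_fst (n : ℕ) (c c' : ℂ) (w : CnC n) : (diagMap n c c' w).fst = c • w.fst := rfl
lemma diagMap_snd (n : ℕ) (c c' : ℂ) (w : CnC n) : (diagMap n c c' w).snd = c' • w.snd := rfl

lemma diagMap_diagMap (n : ℕ) (a b a' b' : ℂ) (w : CnC n) :
    diagMap n a b (diagMap n a' b' w) = diagMap n (a * a') (b * b') w := by
  have h1 : (diagMap n a b (diagMap n a' b' w)).fst = (diagMap n (a*a') (b*b') w).fst := by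
    simp only [diagMap_fst, smul_smul]
  have h2 : (diagMap n a b (diagMap n a' b' w)).snd = (diagMap n (a*a') (b*b') w).snd := by
    simp only [diagMap_snd, smul_smul]
  exact WithLp.ofLp_injective 2 (Prod.ext h1 h2)

lemma diagMap_one_one (n : ℕ) (w : CnC n) : diagMap n 1 1 w = w := by
  have h1 : (diagMap n 1 1 w).fst = w.fst := by simp [diagMap_fst]
  have h2 : (diagMap n 1 1 w).snd = w.snd := by simp [diagMap_snd]
  exact WithLp.ofLp_injective 2 (Prod.ext h1 h2)

lemma diagMap_smul (n : ℕ) (a b c : ℂ) (w : CnC n) :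
    diagMap n a b (c • w) = diagMap n (a * c) (b * c) w := by
  have h1 : (diagMap n a b (c • w)).fst = (diagMap n (a*c) (b*c) w).fst := by
    rw [diagMap_fst, diagMap_fst, show (c • w).fst = c • w.fst from rfl, smul_smul]
  have h2 : (diagMap n a b (c • w)).snd = (diagMap n (a*c) (b*c) w).snd := by
    rw [diagMap_snd, diagMap_snd, show (c • w).snd = c • w.snd from rfl, smul_smul]
  exact WithLp.ofLp_injective 2 (Prod.ext h1 h2)

lemma norm_diagMap_sq (n : ℕ) (a b : ℂ) (w : CnC n) :
    ‖diagMap n a b w‖ ^ 2 = ‖a‖ ^ 2 * ‖w.fst‖ ^ 2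
      + ‖b‖ ^ 2 * ‖w.snd‖ ^ 2 := by
  rw [WithLp.prod_norm_sq_eq_of_L2, diagMap_fst, diagMap_snd, norm_smul, norm_smul]
  simp [mul_pow]

lemma norm_diagMap_congr {a b a' b' : ℂ} (ha : ‖a‖ = ‖a'‖)
    (hb : ‖b‖ = ‖b'‖) (w : CnC n) :
    ‖diagMap n a b w‖ = ‖diagMap n a' b' w‖ := by
  have h : ‖diagMap n a b w‖ ^ 2 = ‖diagMap n a' b' w‖ ^ 2 := by
    rw [norm_diagMap_sq, norm_diagMap_sq, ha, hb]
  have := congrArg Real.sqrt h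
  rwa [Real.sqrt_sq (norm_nonneg _), Real.sqrt_sq (norm_nonneg _)] at this

lemma opNorm_congr {E F : Type*} [NormedAddCommGroup E] [NormedSpace ℂ E]
    [NormedAddCommGroup F] [NormedSpace ℂ F] {A B : E →L[ℂ] F}
    (h : ∀ x, ‖A x‖ = ‖B x‖) : ‖A‖ = ‖B‖ := by
  apply le_antisymm
  · exact A.opNorm_le_bound (norm_nonneg B) fun x => (h x).le.trans (B.le_opNorm x)
  · exact B.opNorm_le_bound (norm_nonneg A) fun x => (h x).ge.trans (A.le_opNorm x)

end Aux

section Aux2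
open ContinuousLinearMap

instance (n : ℕ) : FiniteDimensional ℂ (CnC n) := by infer_instance

instance (n : ℕ) : ContinuousSMul ℂ (CnC n) := IsBoundedSMul.continuousSMul

lemma mem_perp_iff {n : ℕ} (v : Cn n) (x : CnC n) :
    x ∈ perp (mkPair v 0) ↔ (inner ℂ v x.fst : ℂ) = 0 := by
  rw [perp, Submodule.mem_orthogonal_singleton_iff_inner_right, WithLp.prod_inner_apply]
  have h1 : (mkPair v 0).ofLp.1 = v := rfl
  have h2 : (mkPair v 0).ofLp.2 = (0 : ℂ) := rfl
  rw [h1, h2, inner_zero_left, add_zero]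
  exact Iff.rfl

lemma diagMap_mem_perp {n : ℕ} (v : Cn n) (c : ℂ) (x : CnC n)
    (hx : x ∈ perp (mkPair v 0)) : diagMap n 1 c x ∈ perp (mkPair v 0) := by
  rw [mem_perp_iff] at hx ⊢
  rw [diagMap_fst, one_smul]
  exact hx

/-- The restriction of `diag(1, s⁻¹)` to `v^⊥ × ℂ`, as a linear equivalence. -/
def perpDiagLE {n : ℕ} (v : Cn n) (s : ℂ) (hs : s ≠ 0) :
    perp (mkPair v 0) ≃ₗ[ℂ] perp (mkPair v 0) where
  toFun x := ⟨diagMap n 1 s⁻¹ x, diagMap_mem_perp v s⁻¹ x x.2⟩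
  invFun x := ⟨diagMap n 1 s x, diagMap_mem_perp v s x x.2⟩
  map_add' x y := by ext1; simp [map_add]
  map_smul' c x := by ext1; simp [map_smul]
  left_inv x := by
    ext1
    simp only
    rw [diagMap_diagMap, one_mul, mul_inv_cancel₀ hs, diagMap_one_one]
  right_inv x := by
    ext1
    simp only
    rw [diagMap_diagMap, one_mul, inv_mul_cancel₀ hs, diagMap_one_one]

/-- Same, as a continuous linear equivalence. -/
def perpDiag {n : ℕ} (v : Cn n) (s : ℂ) (hs : s ≠ 0) :
    perp (mkPair v 0) ≃L[ℂ] perp (mkPair v 0) :=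
  { perpDiagLE v s hs with
    continuous_toFun :=
      ((diagMap n 1 s⁻¹).continuous.comp continuous_subtype_val).subtype_mk _
    continuous_invFun :=
      ((diagMap n 1 s).continuous.comp continuous_subtype_val).subtype_mk _ }

lemma perpDiag_coe {n : ℕ} (v : Cn n) (s : ℂ) (hs : s ≠ 0) (x : perp (mkPair v 0)) :
    ((perpDiag v s hs x : perp (mkPair v 0)) : CnC n) = diagMap n 1 s⁻¹ (x : CnC n) := rfl

lemma perpDiag_symm_coe {n : ℕ} (v : Cn n) (s : ℂ) (hs : s ≠ 0) (x : perp (mkPair v 0)) :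
    (((perpDiag v s hs).symm x : perp (mkPair v 0)) : CnC n) = diagMap n 1 s (x : CnC n) := rfl

/-- Multiplication by a nonzero scalar on `ℂⁿ` as a continuous linear equivalence. -/
def scalEq (n : ℕ) (c : ℂ) (hc : c ≠ 0) : Cn n ≃L[ℂ] Cn n :=
  (LinearEquiv.smulOfNeZero ℂ (Cn n) c hc).toContinuousLinearEquiv

lemma scalEq_apply (n : ℕ) (c : ℂ) (hc : c ≠ 0) (x : Cn n) : scalEq n c hc x = c • x := rfl

lemma scalEq_symm_apply (n : ℕ) (c : ℂ) (hc : c ≠ 0) (x : Cn n) :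
    (scalEq n c hc).symm x = c⁻¹ • x := by
  have : (scalEq n c hc) (c⁻¹ • x) = x := by
    rw [scalEq_apply, smul_smul, mul_inv_cancel₀ hc, one_smul]
  exact ((scalEq n c hc).symm_apply_eq.mpr this.symm)

end Aux2

section Aux3

lemma bwNormSq_smul (n d : ℕ) (c : ℂ) (hc : c ≠ 0) (p : MvPolynomial (Fin n) ℂ) :
    bwNormSq n d (c • p) = ‖c‖ ^ 2 * bwNormSq n d p := by
  unfold bwNormSq
  rw [MvPolynomial.support_smul_eq hc, Finset.mul_sum]
  apply Finset.sum_congr rfl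
  intro α _
  rw [MvPolynomial.coeff_smul, smul_eq_mul, norm_mul, mul_pow]
  ring

lemma bwNorm_smul (n d : ℕ) (c : ℂ) (hc : c ≠ 0) (f : Fin n → MvPolynomial (Fin n) ℂ) :
    bwNorm n d (fun i => c • f i) = ‖c‖ * bwNorm n d f := by
  unfold bwNorm
  rw [← Real.sqrt_sq (norm_nonneg c), ← Real.sqrt_mul (sq_nonneg _)]
  congr 1
  rw [Finset.mul_sum]
  exact Finset.sum_congr rfl fun i _ => bwNormSq_smul n d c hc (f i)

lemma bwNormSq_nonneg (n d : ℕ) (p : MvPolynomial (Fin n) ℂ) : 0 ≤ bwNormSq n d p := by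
  unfold bwNormSq
  apply Finset.sum_nonneg
  intro α _
  apply div_nonneg _ (Nat.cast_nonneg _)
  apply mul_nonneg (sq_nonneg _)
  positivity

lemma bwNorm_nonneg (n d : ℕ) (f : Fin n → MvPolynomial (Fin n) ℂ) : 0 ≤ bwNorm n d f :=
  Real.sqrt_nonneg _

/-- The key scaling identity: `F_{s^{d-1} f}(X, Λ) = s^{d-1} F_f(X, s⁻¹ Λ)`. -/
lemma FF_scale (n d : ℕ) (f : Fin n → MvPolynomial (Fin n) ℂ) (s : ℂ) (hs : s ≠ 0)
    (w : CnC n) :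
    FF n d (fun i => s ^ (d - 1) • f i) w
      = (s ^ (d - 1)) • FF n d f (diagMap n 1 s⁻¹ w) := by
  unfold FF
  have hsm : ∀ (h : Fin n → ℂ) (c : ℂ),
      (WithLp.equiv 2 (Fin n → ℂ)).symm (c • h) = c • (WithLp.equiv 2 (Fin n → ℂ)).symm h :=
    fun _ _ => rfl
  rw [← hsm]
  congr 1
  funext i
  have h1 : ((WithLp.equiv 2 (Cn n × ℂ)) (diagMap n 1 s⁻¹ w)).1
      = ((WithLp.equiv 2 (Cn n × ℂ)) w).1 := by
    rw [diagMap_apply]; simp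
  have h2 : ((WithLp.equiv 2 (Cn n × ℂ)) (diagMap n 1 s⁻¹ w)).2
      = s⁻¹ * ((WithLp.equiv 2 (Cn n × ℂ)) w).2 := by
    rw [diagMap_apply]; simp [smul_eq_mul]
  rw [MvPolynomial.smul_eval]
  simp only [Pi.smul_apply, h1, h2, smul_eq_mul]
  rw [mul_pow, inv_pow, mul_sub]
  congr 1
  field_simp

end Aux3

section Aux4
open ContinuousLinearMap

/-- The coordinate extraction `ℂⁿ×ℂ → (Fin n → ℂ)` as a CLM. -/
def coordsCLM (n : ℕ) : CnC n →L[ℂ] (Fin n → ℂ) :=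
  ((PiLp.continuousLinearEquiv 2 ℂ (fun _ : Fin n => ℂ)) : Cn n →L[ℂ] (Fin n → ℂ)).comp
    ((ContinuousLinearMap.fst ℂ (Cn n) ℂ).comp
      ((WithLp.prodContinuousLinearEquiv 2 ℂ (Cn n) ℂ) : CnC n →L[ℂ] (Cn n × ℂ)))

lemma coordsCLM_apply (n : ℕ) (w : CnC n) :
    coordsCLM n w = fun j => ((WithLp.equiv 2 (Cn n × ℂ)) w).1 j := rfl

/-- The `Λ`-coordinate as a CLM. -/
def lamCLM (n : ℕ) : CnC n →L[ℂ] ℂ :=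
  (ContinuousLinearMap.snd ℂ (Cn n) ℂ).comp
    ((WithLp.prodContinuousLinearEquiv 2 ℂ (Cn n) ℂ) : CnC n →L[ℂ] (Cn n × ℂ))

lemma lamCLM_apply (n : ℕ) (w : CnC n) :
    lamCLM n w = ((WithLp.equiv 2 (Cn n × ℂ)) w).2 := rfl

lemma differentiable_FF (n d : ℕ) (f : Fin n → MvPolynomial (Fin n) ℂ) :
    Differentiable ℂ (FF n d f) := by
  have key : Differentiable ℂ (fun w : CnC n => (fun i =>
      MvPolynomial.eval (fun j => ((WithLp.equiv 2 (Cn n × ℂ)) w).1 j) (f i)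
        - ((WithLp.equiv 2 (Cn n × ℂ)) w).2 ^ (d - 1)
          * ((WithLp.equiv 2 (Cn n × ℂ)) w).1 i : Fin n → ℂ)) := by
    rw [differentiable_pi]
    intro i
    apply Differentiable.sub
    · have h := AnalyticOnNhd.eval_continuousLinearMap (coordsCLM n) (f i)
      intro w
      have := (h w trivial).differentiableAt
      exact this.congr_of_eventuallyEq (Filter.Eventually.of_forall fun x => rfl)
    · apply Differentiable.mul
      · exact fun w => (((lamCLM n).differentiable.pow (d-1)) w).congr_of_eventuallyEq
          (Filter.Eventually.of_forall fun x => rfl)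
      · have : Differentiable ℂ fun w : CnC n => coordsCLM n w i :=
          ((ContinuousLinearMap.proj i).comp (coordsCLM n)).differentiable
        exact this
  have : FF n d f = fun w =>
      (PiLp.continuousLinearEquiv 2 ℂ (fun _ : Fin n => ℂ)).symm
        ((fun i => MvPolynomial.eval (fun j => ((WithLp.equiv 2 (Cn n × ℂ)) w).1 j) (f i)
          - ((WithLp.equiv 2 (Cn n × ℂ)) w).2 ^ (d - 1)
            * ((WithLp.equiv 2 (Cn n × ℂ)) w).1 i : Fin n → ℂ)) := rfl
  rw [this]
  exact (PiLp.continuousLinearEquiv 2 ℂ (fun _ : Fin n => ℂ)).symm.differentiable.comp key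

end Aux4

section Aux5
open ContinuousLinearMap

lemma fderiv_FF_scale (n d : ℕ) (f : Fin n → MvPolynomial (Fin n) ℂ) (s : ℂ) (hs : s ≠ 0)
    (w' : CnC n) :
    fderiv ℂ (FF n d (fun i => s ^ (d - 1) • f i)) w'
      = (s ^ (d - 1) : ℂ) •
          ((fderiv ℂ (FF n d f) (diagMap n 1 s⁻¹ w')).comp (diagMap n 1 s⁻¹)) := by
  have h : FF n d (fun i => s ^ (d - 1) • f i)
      = fun w => (s ^ (d - 1) : ℂ) • FF n d f (diagMap n 1 s⁻¹ w) :=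
    funext (FF_scale n d f s hs)
  rw [h]
  have hdiff : DifferentiableAt ℂ (fun w => FF n d f (diagMap n 1 s⁻¹ w)) w' :=
    ((differentiable_FF n d f).comp (diagMap n 1 s⁻¹).differentiable) w'
  rw [fderiv_fun_const_smul hdiff]
  congr 1
  rw [show (fun w => FF n d f (diagMap n 1 s⁻¹ w)) = (FF n d f) ∘ (diagMap n 1 s⁻¹) from rfl]
  rw [fderiv_comp w' ((differentiable_FF n d f) _) ((diagMap n 1 s⁻¹).differentiableAt)]
  rw [(diagMap n 1 s⁻¹).fderiv]

lemma diagMap_mkPair (n : ℕ) (s : ℂ) (hs : s ≠ 0) (v : Cn n) (lam : ℂ) :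
    diagMap n 1 s⁻¹ (mkPair v (s * lam)) = mkPair v lam := by
  have h1 : (diagMap n 1 s⁻¹ (mkPair v (s * lam))).fst = (mkPair v lam).fst := by
    rw [diagMap_fst, one_smul]; rfl
  have h2 : (diagMap n 1 s⁻¹ (mkPair v (s * lam))).snd = (mkPair v lam).snd := by
    rw [diagMap_snd]
    show s⁻¹ • (s * lam) = lam
    rw [smul_eq_mul, ← mul_assoc, inv_mul_cancel₀ hs, one_mul]
  exact WithLp.ofLp_injective 2 (Prod.ext h1 h2)

lemma DFr_scale (n d : ℕ) (f : Fin n → MvPolynomial (Fin n) ℂ) (v : Cn n) (lam s : ℂ)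
    (hs : s ≠ 0) :
    DFr n d (fun i => s ^ (d - 1) • f i) (mkPair v (s * lam)) (mkPair v 0)
      = ((scalEq n (s ^ (d - 1)) (pow_ne_zero _ hs) : Cn n →L[ℂ] Cn n)).comp
          ((DFr n d f (mkPair v lam) (mkPair v 0)).comp
            ((perpDiag v s hs : perp (mkPair v 0) ≃L[ℂ] perp (mkPair v 0)) :
              perp (mkPair v 0) →L[ℂ] perp (mkPair v 0))) := by
  ext1 x
  simp only [DFr, ContinuousLinearMap.comp_apply, Submodule.coe_subtypeL,
    Submodule.coe_subtype, ContinuousLinearEquiv.coe_coe]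
  rw [fderiv_FF_scale n d f s hs, diagMap_mkPair n s hs v lam]
  simp only [ContinuousLinearMap.smul_apply, ContinuousLinearMap.comp_apply]
  rw [scalEq_apply]
  congr 1

end Aux5

section Aux6

lemma abs_entry1 (n d : ℕ) (f : Fin n → MvPolynomial (Fin n) ℂ) (s : ℂ) (hs : s ≠ 0) :
    ‖(((bwNorm n d (fun i => s ^ (d - 1) • f i) : ℝ) : ℂ) * (s ^ (d - 1))⁻¹ * 1)‖
      = ‖((bwNorm n d f : ℝ) : ℂ)‖ := by
  rw [mul_one, bwNorm_smul n d _ (pow_ne_zero _ hs), norm_mul, norm_inv, norm_pow,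
    Complex.norm_real, Complex.norm_real, Real.norm_eq_abs, Real.norm_eq_abs,
    abs_of_nonneg (mul_nonneg (by positivity) (bwNorm_nonneg n d f)),
    abs_of_nonneg (bwNorm_nonneg n d f)]
  have ht : ‖s‖ ≠ 0 := norm_ne_zero_iff.mpr hs
  field_simp

lemma abs_entry2 (n d : ℕ) (hd : 2 ≤ d) (f : Fin n → MvPolynomial (Fin n) ℂ) (s : ℂ)
    (hs : s ≠ 0) :
    ‖((((bwNorm n d (fun i => s ^ (d - 1) • f i)
          ^ (((d : ℝ) - 2) / ((d : ℝ) - 1)) : ℝ) : ℂ)) * (s ^ (d - 1))⁻¹ * s)‖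
      = ‖(((bwNorm n d f ^ (((d : ℝ) - 2) / ((d : ℝ) - 1)) : ℝ) : ℂ))‖ := by
  set c' : ℝ := ((d : ℝ) - 2) / ((d : ℝ) - 1) with hc'
  set t : ℝ := ‖s‖ with htdef
  have ht0 : 0 < t := norm_pos_iff.mpr hs
  have htne : t ≠ 0 := ht0.ne'
  set F : ℝ := bwNorm n d f with hF
  have hF0 : 0 ≤ F := bwNorm_nonneg n d f
  have hg : bwNorm n d (fun i => s ^ (d - 1) • f i) = t ^ (d - 1) * F := by
    rw [bwNorm_smul n d _ (pow_ne_zero _ hs), norm_pow]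
  rw [hg, norm_mul, norm_mul, norm_inv, norm_pow, Complex.norm_real, Complex.norm_real,
    Real.norm_eq_abs, Real.norm_eq_abs,
    abs_of_nonneg (Real.rpow_nonneg (mul_nonneg (by positivity) hF0) _),
    abs_of_nonneg (Real.rpow_nonneg hF0 _)]
  rw [Real.mul_rpow (by positivity) hF0]
  have hd1 : ((d - 1 : ℕ) : ℝ) = (d : ℝ) - 1 := by
    rw [Nat.cast_sub (by omega : 1 ≤ d), Nat.cast_one]
  have hne : (d : ℝ) - 1 ≠ 0 := by
    have : (2 : ℝ) ≤ (d : ℝ) := by exact_mod_cast hd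
    linarith
  have key : (t ^ (d - 1)) ^ c' = t ^ (d - 2) := by
    rw [← Real.rpow_natCast t (d - 1), ← Real.rpow_mul ht0.le]
    have : ((d - 1 : ℕ) : ℝ) * c' = ((d - 2 : ℕ) : ℝ) := by
      rw [hd1, Nat.cast_sub hd, hc']
      push_cast
      field_simp
    rw [this, Real.rpow_natCast]
  rw [key]
  have hpow : t ^ (d - 2) * t = t ^ (d - 1) := by
    rw [← pow_succ]
    congr 1
    omega
  calc t ^ (d - 2) * F ^ c' * (t ^ (d - 1))⁻¹ * t
      = F ^ c' * ((t ^ (d - 2) * t) * (t ^ (d - 1))⁻¹) := by ring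
    _ = F ^ c' := by rw [hpow, mul_inv_cancel₀ (pow_ne_zero _ htne), mul_one]

end Aux6
end AuxAll
theorem muHat_scale_invariant (n d : ℕ) (hn : 2 ≤ n) (hd : 2 ≤ d)
    (f : Fin n → MvPolynomial (Fin n) ℂ) (hhom : ∀ i, (f i).IsHomogeneous d)
    (v : Cn n) (hv : v ≠ 0) (lam : ℂ)
    (hinv : RestrInvertible n d f (mkPair v lam) (mkPair v 0)) :
    ∀ s : ℂ, s ≠ 0 →
      RestrInvertible n d (fun i => s ^ (d - 1) • f i) (mkPair v (s * lam)) (mkPair v 0) ∧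
      muHat n d (fun i => s ^ (d - 1) • f i) v (s * lam) = muHat n d f v lam := by
  intro s hs
  have hc : (s ^ (d - 1) : ℂ) ≠ 0 := pow_ne_zero _ hs
  have hDg := DFr_scale n d f v lam s hs
  have hTinv : (DFr n d f (mkPair v lam) (mkPair v 0)).IsInvertible := hinv
  have hInvNew : RestrInvertible n d (fun i => s ^ (d - 1) • f i)
      (mkPair v (s * lam)) (mkPair v 0) := by
    show (DFr n d (fun i => s ^ (d - 1) • f i) (mkPair v (s * lam))
      (mkPair v 0)).IsInvertible
    rw [hDg, ContinuousLinearMap.isInvertible_equiv_comp,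
      ContinuousLinearMap.isInvertible_comp_equiv]
    exact hTinv
  refine ⟨hInvNew, ?_⟩
  have hinvrel : (DFr n d (fun i => s ^ (d - 1) • f i) (mkPair v (s * lam))
        (mkPair v 0)).inverse
      = (((perpDiag v s hs).symm :
            perp (mkPair v 0) →L[ℂ] perp (mkPair v 0)).comp
          ((DFr n d f (mkPair v lam) (mkPair v 0)).inverse)).comp
            ((scalEq n (s ^ (d - 1)) hc).symm : Cn n →L[ℂ] Cn n) := by
    rw [hDg, ContinuousLinearMap.inverse_equiv_comp,
      ContinuousLinearMap.inverse_comp_equiv]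
  unfold muHat
  rw [hinvrel]
  apply opNorm_congr
  intro y
  simp only [ContinuousLinearMap.comp_apply, ContinuousLinearEquiv.coe_coe,
    Submodule.coe_subtypeL, Submodule.coe_subtype]
  rw [scalEq_symm_apply, map_smul, map_smul]
  have hcoe : ∀ (c : ℂ) (x : perp (mkPair v 0)), ((c • x : perp (mkPair v 0)) : CnC n)
      = c • (x : CnC n) := fun _ _ => rfl
  rw [hcoe, perpDiag_symm_coe, diagMap_smul, diagMap_diagMap]
  exact norm_diagMap_congr
    (by
      have := abs_entry1 n d f s hs
      convert this using 2 <;> ring)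
    (by
      have := abs_entry2 n d hd f s hs
      convert this using 2 <;> ring)
    _
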